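/- Let 𝒮 be a finite-dimensional C*-algebra (e.g. a matrix algebra), 𝒟 ⊂ 𝒮 an open set, Φ ∈ B(𝒮) a bounded linear map, and G: 𝒟 → 𝒮 an analytic (continuously differentiable suffices) solution of the Schwinger–Dyson equation 1 + (Λ + Φ(G(Λ)))G(Λ) = 0 for all Λ ∈ 𝒟. Then for every Λ ∈ 𝒟 and ζ ∈ 𝒮, writing G = G(Λ) and G'(ζ) for the directional derivative D[G](Λ; ζ), one has ζ = G⁻¹ G'(ζ) G⁻¹ − Φ(G'(ζ)), and consequently 0 = G + G'(Λ) + 2·G'(Φ(G)) (the last using G'(G⁻¹ ζ G⁻¹ − Φ(ζ)) = ζ). -/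

import Mathlib

/-- Proposition 6.2 (differentiated Schwinger–Dyson equation): let `𝒮` be a
finite-dimensional Banach algebra (e.g. a block algebra), `D ⊆ 𝒮` open,
`Φ : 𝒮 → 𝒮` a bounded linear map, and `G : D → 𝒮` a solution of the
Schwinger–Dyson equation `1 + (Λ + Φ(G(Λ)))·G(Λ) = 0` on `D`, differentiable at
`Λ ∈ D` with derivative `G'`.  Then `G(Λ)` is invertible, for every `ζ` one has
`ζ = G(Λ)⁻¹·G'(ζ)·G(Λ)⁻¹ − Φ(G'(ζ))`, and `G(Λ) + G'(Λ) + 2·G'(Φ(G(Λ))) = 0`. -/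
theorem schwinger_dyson_differentiated {𝒮 : Type*} [NormedRing 𝒮]
    [NormedAlgebra ℂ 𝒮] [CompleteSpace 𝒮] [FiniteDimensional ℂ 𝒮]
    (D : Set 𝒮) (hD : IsOpen D) (Φ : 𝒮 →L[ℂ] 𝒮) (G : 𝒮 → 𝒮)
    (hSD : ∀ Λ ∈ D, (1 : 𝒮) + (Λ + Φ (G Λ)) * G Λ = 0)
    (Λ : 𝒮) (hΛ : Λ ∈ D) (G' : 𝒮 →L[ℂ] 𝒮) (hG' : HasFDerivAt G G' Λ) :
    IsUnit (G Λ) ∧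
    (∀ ζ : 𝒮, ζ = Ring.inverse (G Λ) * G' ζ * Ring.inverse (G Λ) - Φ (G' ζ)) ∧
    G Λ + G' Λ + 2 • G' (Φ (G Λ)) = 0 := by
  set g := G Λ with hg
  set A : 𝒮 := -(Λ + Φ g) with hAdef
  -- left inverse
  have hA : A * g = 1 := by
    have h := hSD Λ hΛ
    have hX : (Λ + Φ g) * g = -1 := eq_neg_of_add_eq_zero_right h
    rw [hAdef, neg_mul, hX, neg_neg]
  -- right inverse via finite dimension
  have hBA : g * A = 1 := by
    have h1 : (LinearMap.mulLeft ℂ A) * (LinearMap.mulLeft ℂ g) = 1 := by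
      rw [Module.End.mul_eq_comp, ← LinearMap.mulLeft_mul, hA]
      ext x; simp
    have h2 := mul_eq_one_comm.mp h1
    have := LinearMap.ext_iff.mp h2 1
    simpa [LinearMap.mulLeft, mul_assoc] using this
  have hu : IsUnit g := ⟨⟨g, A, hBA, hA⟩, rfl⟩
  have hinv : Ring.inverse g = A := by
    have : Ring.inverse g * g = 1 := Ring.inverse_mul_cancel g hu
    calc Ring.inverse g = Ring.inverse g * (g * A) := by rw [hBA, mul_one]
      _ = (Ring.inverse g * g) * A := by rw [mul_assoc]
      _ = A := by rw [this, one_mul]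
  -- differentiate the SD equation
  have h1 : HasFDerivAt (fun x => x + Φ (G x))
      (ContinuousLinearMap.id ℂ 𝒮 + Φ.comp G') Λ :=
    (hasFDerivAt_id Λ).add (Φ.hasFDerivAt.comp Λ hG')
  have h2 := h1.mul' hG'
  have h3 := h2.const_add (1 : 𝒮)
  have hev : (fun x => (1 : 𝒮) + (x + Φ (G x)) * G x) =ᶠ[nhds Λ] fun _ => (0 : 𝒮) :=
    Filter.eventuallyEq_of_mem (hD.mem_nhds hΛ) hSD
  have h4 : HasFDerivAt (fun _ : 𝒮 => (0 : 𝒮))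
      ((Λ + Φ (G Λ)) • G' + (ContinuousLinearMap.id ℂ 𝒮 + Φ.comp G').smulRight (G Λ)) Λ :=
    h3.congr_of_eventuallyEq hev.symm
  have h5 : ((Λ + Φ (G Λ)) • G' + (ContinuousLinearMap.id ℂ 𝒮 + Φ.comp G').smulRight (G Λ)) = 0 :=
    h4.unique (hasFDerivAt_const 0 Λ)
  have key : ∀ ζ : 𝒮, (Λ + Φ g) * G' ζ + (ζ + Φ (G' ζ)) * g = 0 := by
    intro ζ
    have := ContinuousLinearMap.ext_iff.mp h5 ζ
    simpa [ContinuousLinearMap.smulRight_apply, smul_eq_mul, add_mul, ← hg] using this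
  -- part 2
  have part2 : ∀ ζ : 𝒮, ζ = A * G' ζ * A - Φ (G' ζ) := by
    intro ζ
    have hk := key ζ
    have h6 : (ζ + Φ (G' ζ)) * g = A * G' ζ := by
      rw [hAdef, neg_mul]
      exact eq_neg_of_add_eq_zero_right hk
    have h7 : (ζ + Φ (G' ζ)) * g * A = A * G' ζ * A := by rw [h6]
    rw [mul_assoc, hBA, mul_one] at h7
    rw [← h7]; abel
  refine ⟨hu, by simpa [hinv] using part2, ?_⟩
  -- part 3
  set T : 𝒮 →ₗ[ℂ] 𝒮 :=
    { toFun := fun η => A * η * A - Φ η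
      map_add' := fun x y => by simp [mul_add, add_mul]; abel
      map_smul' := fun c x => by simp [smul_sub, mul_smul_comm, smul_mul_assoc] } with hT
  have hTG : T * (G' : 𝒮 →ₗ[ℂ] 𝒮) = 1 := by
    ext ζ
    simpa [hT] using (part2 ζ).symm
  have hGT := mul_eq_one_comm.mp hTG
  have h8 : G' (T g) = g := LinearMap.ext_iff.mp hGT g
  have hTg : T g = -Λ - Φ g - Φ g := by
    simp only [hT, LinearMap.coe_mk, AddHom.coe_mk]
    rw [show A * g * A = A by rw [hA, one_mul], hAdef]
    abel
  rw [hTg] at h8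
  have : G' (-Λ - Φ g - Φ g) = -G' Λ - G' (Φ g) - G' (Φ g) := by
    simp [map_sub, map_neg]
  rw [this] at h8
  rw [two_smul]
  linear_combination (norm := abel) -h8
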